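/- If equality holds in the Ratio-type bound α_k(Γ) ≤ n (W(p) − λ(p)) / (p(λ_1) − λ(p)) for a k-independent set U, then W(p) = (1/|U|) Σ_{u∈U} (p(A))_{uu}, i.e., the maximum diagonal entry of p(A) equals its average over U. -/

import Mathlib

open Polynomial Matrix

lemma aux_aeval_mulVec {V : Type} [Fintype V] [DecidableEq V]
    (A : Matrix V V ℝ) (q : ℝ[X]) (v : V → ℝ) (μ : ℝ) (h : A *ᵥ v = μ • v) :
    (aeval A q) *ᵥ v = q.eval μ • v := by
  induction q using Polynomial.induction_on with
  | C a => simp [Polynomial.aeval_C, Matrix.smul_mulVec, Algebra.algebraMap_eq_smul_one]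
  | add f g hf hg => simp [add_mulVec, hf, hg, add_smul]
  | monomial n a ih =>
      have h1 : (aeval A ((C a * X ^ (n+1) : ℝ[X]))) = (aeval A (C a * X ^ n)) * A := by
        rw [show (C a * X ^ (n+1) : ℝ[X]) = (C a * X ^ n) * X by ring, _root_.map_mul, aeval_X]
      rw [h1, ← Matrix.mulVec_mulVec, h, Matrix.mulVec_smul, ih]
      simp [smul_smul]; ring_nf

lemma aux_aeval_isSymm {V : Type} [Fintype V] [DecidableEq V]
    (A : Matrix V V ℝ) (hA : A.IsSymm) (q : ℝ[X]) : (aeval A q).IsSymm := by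
  induction q using Polynomial.induction_on with
  | C a => simp [Matrix.IsSymm, Algebra.algebraMap_eq_smul_one, Matrix.transpose_smul]
  | add f g hf hg => simpa [Matrix.IsSymm, Matrix.transpose_add] using congrArg₂ (· + ·) hf hg
  | monomial n a ih =>
      have h1 : (aeval A ((C a * X ^ (n+1) : ℝ[X]))) = (aeval A (C a * X ^ n)) * A := by
        rw [show (C a * X ^ (n+1) : ℝ[X]) = (C a * X ^ n) * X by ring, _root_.map_mul, aeval_X]
      have h2 : (aeval A ((C a * X ^ (n+1) : ℝ[X]))) = A * (aeval A (C a * X ^ n)) := by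
        rw [show (C a * X ^ (n+1) : ℝ[X]) = X * (C a * X ^ n) by ring, _root_.map_mul, aeval_X]
      unfold Matrix.IsSymm
      rw [h1, Matrix.transpose_mul, hA, ih, ← h2]
      exact h1

lemma aux_eval_charpoly {V : Type} [Fintype V] [DecidableEq V]
    (M : Matrix V V ℝ) (t : ℝ) :
    M.charpoly.eval t = (Matrix.diagonal (fun _ : V => t) - M).det := by
  rw [Matrix.charpoly, _root_.eval_det, matPolyEquiv_charmatrix]
  simp [Matrix.scalar_apply]

lemma aux_det_eq_zero_iff_eigen {V : Type} [Fintype V] [DecidableEq V]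
    (M : Matrix V V ℝ) (t : ℝ) :
    (Matrix.diagonal (fun _ : V => t) - M).det = 0 ↔ ∃ v ≠ 0, M *ᵥ v = t • v := by
  rw [← Matrix.exists_mulVec_eq_zero_iff]
  apply exists_congr; intro v
  apply and_congr_right; intro hv
  rw [Matrix.sub_mulVec]
  constructor
  · intro h
    have := sub_eq_zero.mp h
    rw [← this]
    simp [Matrix.diagonal_const_mulVec]
  · intro h
    rw [h]
    simp [sub_eq_zero, Matrix.diagonal_const_mulVec]

lemma aux_charpoly_diagonal {V : Type} [Fintype V] [DecidableEq V] (d : V → ℝ) :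
    (Matrix.diagonal d).charpoly = ∏ v : V, (X - C (d v)) := by
  unfold Matrix.charpoly charmatrix
  rw [Matrix.scalar_apply, RingHom.mapMatrix_apply, Matrix.diagonal_map (by simp),
    Matrix.diagonal_sub, Matrix.det_diagonal]

lemma aux_charpoly_eq_prod {V : Type} [Fintype V] [DecidableEq V]
    {A : Matrix V V ℝ} (hA : A.IsHermitian) :
    A.charpoly = ∏ v : V, (X - C (hA.eigenvalues v)) := by
  classical
  set U : Matrix V V ℝ := (hA.eigenvectorUnitary : Matrix V V ℝ) with hUdef
  have hU1 : U * star U = 1 := (Matrix.mem_unitaryGroup_iff).mp hA.eigenvectorUnitary.2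
  have hspec : A = U * Matrix.diagonal hA.eigenvalues * star U := by
    have := hA.spectral_theorem
    simpa [Function.comp] using this
  set Cm : Matrix V V ℝ →+* Matrix V V ℝ[X] := (Polynomial.C : ℝ →+* ℝ[X]).mapMatrix with hCm
  have hcomm : ∀ N : Matrix V V ℝ[X], Matrix.scalar V (X : ℝ[X]) * N = N * Matrix.scalar V X :=
    fun N => (Matrix.scalar_commute (X : ℝ[X]) (fun r' => Commute.all _ _) N).eq
  have hCm1 : Cm U * Cm (star U) = 1 := by
    rw [← _root_.map_mul, hU1, _root_.map_one]
  have key : charmatrix A = Cm U * charmatrix (Matrix.diagonal hA.eigenvalues) * Cm (star U) := by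
    unfold charmatrix
    rw [mul_sub, sub_mul]
    congr 1
    · rw [← hcomm (Cm U), mul_assoc, hCm1, mul_one]
    · show Cm A = Cm U * Cm (Matrix.diagonal hA.eigenvalues) * Cm (star U)
      conv_lhs => rw [hspec]
      rw [_root_.map_mul, _root_.map_mul]
  have hprod1 : (Cm U).det * (Cm (star U)).det = 1 := by
    rw [← Matrix.det_mul, hCm1, Matrix.det_one]
  have hdet : A.charpoly = (Matrix.diagonal hA.eigenvalues).charpoly := by
    rw [Matrix.charpoly, key, Matrix.det_mul, Matrix.det_mul, Matrix.charpoly,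
      mul_right_comm, hprod1, one_mul]
  rw [hdet, aux_charpoly_diagonal]

lemma aux_repr_eq_sum {V : Type} [Fintype V] [DecidableEq V]
    (B : OrthonormalBasis V ℝ (EuclideanSpace ℝ V)) (x : EuclideanSpace ℝ V) (i : V) :
    B.repr x i = ∑ v, B i v * x v := by
  rw [B.repr_apply_apply, PiLp.inner_apply]
  simp [RCLike.inner_apply, conj_trivial]
  exact Finset.sum_congr rfl fun _ _ => mul_comm _ _

lemma aux_parseval {V : Type} [Fintype V] [DecidableEq V]
    (B : OrthonormalBasis V ℝ (EuclideanSpace ℝ V)) (x y : EuclideanSpace ℝ V) :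
    ∑ v, x v * y v = ∑ i, B.repr x i * B.repr y i := by
  have h := B.repr.inner_map_map x y
  rw [PiLp.inner_apply, PiLp.inner_apply] at h
  simpa [RCLike.inner_apply, conj_trivial, mul_comm] using h.symm

lemma aux_swap {V : Type} [Fintype V] [DecidableEq V]
    (M : Matrix V V ℝ) (hM : M.IsSymm) (y z : V → ℝ) :
    ∑ v, y v * (M *ᵥ z) v = ∑ v, (M *ᵥ y) v * z v := by
  simp only [Matrix.mulVec, dotProduct, Finset.sum_mul, Finset.mul_sum]
  rw [Finset.sum_comm]
  refine Finset.sum_congr rfl fun v _ => Finset.sum_congr rfl fun w _ => ?_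
  rw [← hM.apply v w]
  ring

lemma aux_roots_prod {ι : Type} [Fintype ι] (f : ι → ℝ) :
    (∏ i : ι, (X - C (f i))).roots = Multiset.map f Finset.univ.val := by
  rw [Finset.prod_eq_multiset_prod]
  rw [show Multiset.map (fun i => X - C (f i)) Finset.univ.val
      = Multiset.map (fun a => X - C a) (Multiset.map f Finset.univ.val) by
    rw [Multiset.map_map]; rfl]
  exact roots_multiset_prod_X_sub_C _

/-- If equality holds in the Ratio-type bound for a `k`-independent set `U` of a
regular graph, then `W(p)` equals the average of the diagonal entries of `p(A)`
over `U`. -/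
theorem ratio_type_bound_equality_average_diagonal
    {V : Type} [Fintype V] [DecidableEq V] [Nonempty V]
    (G : SimpleGraph V) [DecidableRel G.Adj]
    (r : ℕ) (hreg : G.IsRegularOfDegree r)
    (lam : Fin (Fintype.card V) → ℝ)
    (hchar : (G.adjMatrix ℝ).charpoly = ∏ i, (Polynomial.X - Polynomial.C (lam i)))
    (hmono : ∀ i j : Fin (Fintype.card V), i ≤ j → lam j ≤ lam i)
    (k : ℕ) (p : Polynomial ℝ) (hp : p.natDegree ≤ k)
    (W lm : ℝ)
    (hW1 : ∀ u : V, (Polynomial.aeval (G.adjMatrix ℝ) p) u u ≤ W)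
    (hW2 : ∃ u : V, (Polynomial.aeval (G.adjMatrix ℝ) p) u u = W)
    (hlm1 : ∀ i : Fin (Fintype.card V), i ≠ ⟨0, Fintype.card_pos⟩ → lm ≤ p.eval (lam i))
    (hlm2 : ∃ i : Fin (Fintype.card V), i ≠ ⟨0, Fintype.card_pos⟩ ∧ p.eval (lam i) = lm)
    (U : Finset V) (hUne : U.Nonempty)
    (hU : ∀ u ∈ U, ∀ v ∈ U, u ≠ v → k < G.dist u v)
    (heq : (U.card : ℝ) =
      (Fintype.card V : ℝ) * (W - lm) / (p.eval (lam ⟨0, Fintype.card_pos⟩) - lm)) :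
    W = (1 / (U.card : ℝ)) * ∑ u ∈ U, (Polynomial.aeval (G.adjMatrix ℝ) p) u u := by
  classical
  set A : Matrix V V ℝ := G.adjMatrix ℝ with hAdef
  set M : Matrix V V ℝ := aeval A p with hMdef
  set zero0 : Fin (Fintype.card V) := ⟨0, Fintype.card_pos⟩ with hzero0
  set lam0 : ℝ := lam zero0 with hlam0
  set N : ℝ := (Fintype.card V : ℝ) with hN
  set m : ℝ := (U.card : ℝ) with hm
  have hNpos : (0:ℝ) < N := by
    rw [hN]; exact_mod_cast Fintype.card_pos
  have hmpos : (0:ℝ) < m := by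
    rw [hm]; exact_mod_cast Finset.card_pos.mpr hUne
  have hAH : A.IsHermitian := by
    rw [Matrix.IsHermitian, Matrix.conjTranspose_eq_transpose_of_trivial]
    exact G.isSymm_adjMatrix
  set B := hAH.eigenvectorBasis with hB
  set eig : V → ℝ := hAH.eigenvalues with heig
  have hMsymm : M.IsSymm := aux_aeval_isSymm A (G.isSymm_adjMatrix) p
  -- the all-ones vector is an eigenvector with eigenvalue r
  set one : EuclideanSpace ℝ V := WithLp.toLp 2 (fun _ => (1:ℝ)) with hone
  have hrowsum : ∀ v : V, ∑ z : V, A v z = (r : ℝ) := by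
    intro v
    have h := SimpleGraph.adjMatrix_dotProduct (α := ℝ) (G := G) v (fun _ => (1:ℝ))
    simp only [dotProduct, mul_one] at h
    rw [hAdef]
    rw [h, Finset.sum_const, nsmul_eq_mul, mul_one]
    rw [← SimpleGraph.degree, hreg v]
  have hones : A *ᵥ (fun _ => (1:ℝ)) = (r:ℝ) • (fun _ => (1:ℝ)) := by
    funext v
    show ∑ z, A v z * 1 = (r:ℝ) * 1
    simp only [mul_one]
    exact hrowsum v
  have hcolsum : ∀ z : V, ∑ v : V, A v z = (r : ℝ) := by
    intro z
    rw [← hrowsum z]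
    exact Finset.sum_congr rfl fun v _ => (G.isSymm_adjMatrix (α := ℝ)).apply z v
  -- multiset of eigenvalues equals multiset of lam
  have hroots : Multiset.map lam Finset.univ.val = Multiset.map eig Finset.univ.val := by
    have h1 : (∏ i, (X - C (lam i))) = ∏ v : V, (X - C (eig v)) := by
      rw [← hchar, aux_charpoly_eq_prod hAH]
    have := congrArg Polynomial.roots h1
    rwa [aux_roots_prod, aux_roots_prod] at this
  have hex : ∀ v : V, ∃ j, lam j = eig v := by
    intro v
    have hv : eig v ∈ Multiset.map eig Finset.univ.val :=
      Multiset.mem_map_of_mem eig (Finset.mem_univ_val v)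
    rw [← hroots] at hv
    obtain ⟨j, _, hj⟩ := Multiset.mem_map.mp hv
    exact ⟨j, hj⟩
  have hexlm : ∀ v : V, eig v ≠ lam0 → lm ≤ p.eval (eig v) := by
    intro v hv
    obtain ⟨j, hj⟩ := hex v
    have hj0 : j ≠ zero0 := by
      intro h; rw [h] at hj; exact hv hj.symm
    rw [← hj]; exact hlm1 j hj0
  -- r is an eigenvalue hence r ≤ lam0
  have hr_le : (r:ℝ) ≤ lam0 := by
    have hdet : (Matrix.diagonal (fun _ : V => (r:ℝ)) - A).det = 0 :=
      (aux_det_eq_zero_iff_eigen A (r:ℝ)).mpr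
        ⟨fun _ => 1, by intro h; have := congrFun h (Classical.arbitrary V); simp at this, hones⟩
    have : (∏ i, (X - C (lam i))).eval (r:ℝ) = 0 := by
      rw [← hchar, aux_eval_charpoly, hdet]
    rw [Polynomial.eval_prod] at this
    obtain ⟨j, _, hj⟩ := Finset.prod_eq_zero_iff.mp this
    simp only [Polynomial.eval_sub, Polynomial.eval_X, Polynomial.eval_C, sub_eq_zero] at hj
    rw [hj]
    exact hmono zero0 j (by rw [Fin.le_def]; exact Nat.zero_le _)
  -- lam0 is an eigenvalue
  have hlam0ex : ∃ v0 : V, eig v0 = lam0 := by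
    have hv : lam0 ∈ Multiset.map lam Finset.univ.val :=
      Multiset.mem_map_of_mem lam (Finset.mem_univ_val zero0)
    rw [hroots] at hv
    obtain ⟨v0, _, hv0⟩ := Multiset.mem_map.mp hv
    exact ⟨v0, hv0⟩
  -- max principle: lam0 ≤ r, hence lam0 = r
  have hlam0r : lam0 = (r:ℝ) := by
    obtain ⟨v0, hv0⟩ := hlam0ex
    set w : V → ℝ := ⇑(B v0) with hw
    have hwe : A *ᵥ w = lam0 • w := by
      rw [← hv0]
      exact hAH.mulVec_eigenvectorBasis v0
    have hwne : ∃ z, w z ≠ 0 := by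
      by_contra h
      push_neg at h
      have : B v0 = 0 := by
        apply PiLp.ext
        intro z
        exact h z
      exact B.orthonormal.ne_zero v0 this
    obtain ⟨u, _, hu⟩ := Finset.exists_max_image Finset.univ (fun v => |w v|) ⟨Classical.arbitrary V, Finset.mem_univ _⟩
    have huz : 0 < |w u| := by
      obtain ⟨z, hz⟩ := hwne
      exact lt_of_lt_of_le (abs_pos.mpr hz) (hu z (Finset.mem_univ z))
    have h1 : |lam0| * |w u| ≤ (r:ℝ) * |w u| := by
      have hAw : (A *ᵥ w) u = lam0 * w u := by
        rw [hwe]; simp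
      have : |lam0 * w u| = |(A *ᵥ w) u| := by rw [hAw]
      rw [abs_mul] at this
      rw [this]
      calc |(A *ᵥ w) u| = |∑ z, A u z * w z| := by rw [Matrix.mulVec, dotProduct]
        _ ≤ ∑ z, |A u z * w z| := Finset.abs_sum_le_sum_abs _ _
        _ = ∑ z, A u z * |w z| := by
            refine Finset.sum_congr rfl fun z _ => ?_
            rw [abs_mul]
            congr 1
            simp [hAdef, SimpleGraph.adjMatrix_apply, apply_ite]
        _ ≤ ∑ z, A u z * |w u| := by
            refine Finset.sum_le_sum fun z _ => ?_
            have : (0:ℝ) ≤ A u z := by rw [hAdef, SimpleGraph.adjMatrix_apply]; split <;> norm_num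
            exact mul_le_mul_of_nonneg_left (hu z (Finset.mem_univ z)) this
        _ = (r:ℝ) * |w u| := by rw [← Finset.sum_mul, hrowsum u]
    have h2 : |lam0| ≤ (r:ℝ) := le_of_mul_le_mul_right h1 huz
    exact le_antisymm (le_trans (le_abs_self _) h2) hr_le
  -- the indicator vector
  set x : EuclideanSpace ℝ V := WithLp.toLp 2 (fun v => if v ∈ U then (1:ℝ) else 0) with hx
  set c : V → ℝ := fun i => B.repr x i with hc
  set d : V → ℝ := fun i => B.repr one i with hd
  have hxv : ∀ v, x v = if v ∈ U then (1:ℝ) else 0 := fun v => rfl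
  have hc2 : ∑ i, c i * c i = m := by
    rw [hc]
    simp only
    rw [← aux_parseval B x x]
    have hpt : ∀ v : V, x v * x v = if v ∈ U then (1:ℝ) else 0 := by
      intro v; by_cases h : v ∈ U <;> simp [hxv, h]
    rw [Finset.sum_congr rfl (fun v _ => hpt v), Finset.sum_ite_mem, Finset.univ_inter,
      Finset.sum_const, nsmul_eq_mul, mul_one, hm]
  have hd2 : ∑ i, d i * d i = N := by
    rw [hd]
    simp only
    rw [← aux_parseval B one one, hN]
    simp [hone, Finset.card_univ]
  have hdc : ∑ i, d i * c i = m := by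
    rw [hd, hc]
    simp only
    rw [← aux_parseval B one x]
    have hpt : ∀ v : V, one v * x v = if v ∈ U then (1:ℝ) else 0 := by
      intro v; by_cases h : v ∈ U <;> simp [hxv, hone, h]
    rw [Finset.sum_congr rfl (fun v _ => hpt v), Finset.sum_ite_mem, Finset.univ_inter,
      Finset.sum_const, nsmul_eq_mul, mul_one, hm]
  -- d vanishes off the lam0-eigenspace
  have hd0 : ∀ i, eig i ≠ lam0 → d i = 0 := by
    intro i hi
    have h1 : ∑ v, (A *ᵥ ⇑(B i)) v = eig i * ∑ v, B i v := by
      rw [hAH.mulVec_eigenvectorBasis i]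
      simp [Finset.mul_sum]
      rfl
    have h2 : ∑ v, (A *ᵥ ⇑(B i)) v = (r:ℝ) * ∑ v, B i v := by
      simp only [Matrix.mulVec, dotProduct]
      rw [Finset.sum_comm]
      rw [Finset.mul_sum]
      refine Finset.sum_congr rfl fun z _ => ?_
      rw [← Finset.sum_mul, hcolsum z]
    have h3 : (eig i - (r:ℝ)) * ∑ v, B i v = 0 := by
      rw [sub_mul, ← h1, ← h2, sub_self]
    have h4 : eig i - (r:ℝ) ≠ 0 := by
      rw [← hlam0r]; exact sub_ne_zero.mpr hi
    have h5 : ∑ v, B i v = 0 := by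
      rcases mul_eq_zero.mp h3 with h | h
      · exact absurd h h4
      · exact h
    rw [hd]
    simp only
    rw [aux_repr_eq_sum]
    simp only [hone]
    simpa using h5
  -- diagonal sum identity
  have hdiag0 : ∀ u ∈ U, ∀ v ∈ U, u ≠ v → M u v = 0 := by
    intro u hu v hv huv
    have hdist : k < G.dist u v := hU u hu v hv huv
    rw [hMdef, Polynomial.aeval_eq_sum_range]
    rw [Matrix.sum_apply]
    apply Finset.sum_eq_zero
    intro i hi
    have hik : i ≤ k := by
      have := Finset.mem_range.mp hi
      omega
    have hpow : (A ^ i) u v = 0 := by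
      have hie : IsEmpty {q : G.Walk u v | q.length = i} := by
        constructor
        rintro ⟨q, hq⟩
        simp only [Set.mem_setOf_eq] at hq
        have := SimpleGraph.dist_le q
        omega
      have hcard : Fintype.card {q : G.Walk u v | q.length = i} = 0 :=
        @Fintype.card_eq_zero _ _ hie
      rw [hAdef, SimpleGraph.adjMatrix_pow_apply_eq_card_walk, hcard, Nat.cast_zero]
    simp [Matrix.smul_apply, hpow]
  have hQ1 : ∑ u ∈ U, M u u = ∑ v, x v * (M *ᵥ x) v := by
    have hMx : ∀ v, (M *ᵥ x) v = ∑ z ∈ U, M v z := by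
      intro v
      simp only [Matrix.mulVec, dotProduct, hxv, mul_ite, mul_one, mul_zero]
      rw [Finset.sum_ite_mem, Finset.univ_inter]
    have : ∑ v, x v * (M *ᵥ x) v = ∑ v ∈ U, ∑ z ∈ U, M v z := by
      simp only [hxv, ite_mul, one_mul, zero_mul]
      rw [Finset.sum_ite_mem, Finset.univ_inter]
      exact Finset.sum_congr rfl fun v _ => hMx v
    rw [this]
    refine (Finset.sum_congr rfl fun v hv => ?_).symm
    rw [Finset.sum_eq_single_of_mem v hv]
    intro z hz hzv
    exact hdiag0 v hv z hz (Ne.symm hzv)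
  have hMrepr : ∀ i, B.repr (WithLp.toLp 2 (M *ᵥ x : V → ℝ) : EuclideanSpace ℝ V) i = p.eval (eig i) * c i := by
    intro i
    rw [aux_repr_eq_sum]
    have step1 : ∑ v, B i v * (WithLp.toLp 2 (M *ᵥ x : V → ℝ) : EuclideanSpace ℝ V) v
        = ∑ v, (M *ᵥ ⇑(B i)) v * x v := aux_swap M hMsymm (⇑(B i)) x
    rw [step1]
    have step2 : M *ᵥ ⇑(B i) = p.eval (eig i) • ⇑(B i) := by
      rw [hMdef]
      exact aux_aeval_mulVec A p (⇑(B i)) (eig i) (hAH.mulVec_eigenvectorBasis i)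
    rw [step2, hc]
    simp only [Pi.smul_apply, smul_eq_mul]
    rw [aux_repr_eq_sum]
    rw [Finset.mul_sum]
    refine Finset.sum_congr rfl fun v _ => ?_
    show p.eval (eig i) * B i v * x v = p.eval (eig i) * (B i v * x v)
    ring
  have hQ : ∑ u ∈ U, M u u = ∑ i, p.eval (eig i) * (c i * c i) := by
    rw [hQ1, aux_parseval B x (WithLp.toLp 2 (M *ᵥ x : V → ℝ) : EuclideanSpace ℝ V)]
    refine Finset.sum_congr rfl fun i _ => ?_
    rw [hMrepr i]
    rw [hc]
    ring
  -- the key spectral inequality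
  set S : Finset V := Finset.univ.filter (fun i => eig i = lam0) with hS
  have hd0' : ∀ i ∉ S, d i = 0 := by
    intro i hi
    apply hd0
    intro h
    exact hi (Finset.mem_filter.mpr ⟨Finset.mem_univ i, h⟩)
  have hdcS : ∑ i ∈ S, d i * c i = m := by
    rw [← hdc]
    apply Finset.sum_subset (Finset.subset_univ S)
    intro i _ hi
    rw [hd0' i hi, zero_mul]
  have hd2S : ∑ i ∈ S, d i * d i = N := by
    rw [← hd2]
    apply Finset.sum_subset (Finset.subset_univ S)
    intro i _ hi
    rw [hd0' i hi, zero_mul]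
  have hCS : m ^ 2 ≤ N * ∑ i ∈ S, c i * c i := by
    have h := Finset.sum_mul_sq_le_sq_mul_sq S d c
    have e1 : ∑ i ∈ S, d i ^ 2 = N := by
      rw [← hd2S]; exact Finset.sum_congr rfl fun i _ => sq (d i) ▸ by rw [sq]
    have e2 : ∑ i ∈ S, c i ^ 2 = ∑ i ∈ S, c i * c i :=
      Finset.sum_congr rfl fun i _ => by rw [sq]
    calc m ^ 2 = (∑ i ∈ S, d i * c i) ^ 2 := by rw [hdcS]
      _ ≤ (∑ i ∈ S, d i ^ 2) * ∑ i ∈ S, c i ^ 2 := h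
      _ = N * ∑ i ∈ S, c i * c i := by rw [e1, e2]
  have hSmem : ∀ i ∈ S, eig i = lam0 := fun i hi => (Finset.mem_filter.mp hi).2
  have hmain : lm * m + (p.eval lam0 - lm) * (m ^ 2 / N) ≤ ∑ i, p.eval (eig i) * (c i * c i) := by
    have hsplit : ∑ i, p.eval (eig i) * (c i * c i)
        = lm * m + ∑ i, (p.eval (eig i) - lm) * (c i * c i) := by
      have hpt : ∀ i : V, (p.eval (eig i) - lm) * (c i * c i)
          = p.eval (eig i) * (c i * c i) - lm * (c i * c i) := fun i => by ring
      rw [Finset.sum_congr rfl (fun i _ => hpt i), Finset.sum_sub_distrib, ← Finset.mul_sum, hc2]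
      ring
    rw [hsplit]
    have hgoal : (p.eval lam0 - lm) * (m ^ 2 / N) ≤ ∑ i, (p.eval (eig i) - lm) * (c i * c i) := by
      by_cases hgood : ∀ i : V, lm ≤ p.eval (eig i)
      · obtain ⟨v0, hv0⟩ := hlam0ex
        have hP : lm ≤ p.eval lam0 := by rw [← hv0]; exact hgood v0
        have h1 : ∑ i ∈ S, (p.eval (eig i) - lm) * (c i * c i)
            ≤ ∑ i, (p.eval (eig i) - lm) * (c i * c i) := by
          apply Finset.sum_le_sum_of_subset_of_nonneg (Finset.subset_univ S)
          intro i _ _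
          exact mul_nonneg (sub_nonneg.mpr (hgood i)) (mul_self_nonneg _)
        have h2 : ∑ i ∈ S, (p.eval (eig i) - lm) * (c i * c i)
            = (p.eval lam0 - lm) * ∑ i ∈ S, c i * c i := by
          rw [Finset.mul_sum]
          exact Finset.sum_congr rfl fun i hi => by rw [hSmem i hi]
        have h3 : m ^ 2 / N ≤ ∑ i ∈ S, c i * c i := by
          rw [div_le_iff₀ hNpos, mul_comm]
          exact hCS
        calc (p.eval lam0 - lm) * (m ^ 2 / N)
            ≤ (p.eval lam0 - lm) * ∑ i ∈ S, c i * c i :=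
              mul_le_mul_of_nonneg_left h3 (sub_nonneg.mpr hP)
          _ = ∑ i ∈ S, (p.eval (eig i) - lm) * (c i * c i) := h2.symm
          _ ≤ _ := h1
      · push_neg at hgood
        obtain ⟨ib, hib⟩ := hgood
        have higib : eig ib = lam0 := by
          obtain ⟨j, hj⟩ := hex ib
          by_cases hj0 : j = zero0
          · rw [hj0] at hj; exact hj.symm ▸ rfl
          · exact absurd (le_trans (hlm1 j hj0) (le_of_eq (by rw [hj]))) (not_le.mpr hib)
        have hbadP : p.eval lam0 < lm := by rw [← higib]; exact hib
        -- S is a singleton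
        have hfin : Finset.univ.filter (fun j : Fin (Fintype.card V) => lam0 = lam j)
            = {zero0} := by
          apply Finset.eq_singleton_iff_unique_mem.mpr
          refine ⟨Finset.mem_filter.mpr ⟨Finset.mem_univ _, rfl⟩, ?_⟩
          intro j hj
          rcases Finset.mem_filter.mp hj with ⟨-, hj2⟩
          by_contra hjne
          have hle := hlm1 j hjne
          rw [← hj2] at hle
          exact absurd (lt_of_lt_of_le hbadP hle) (lt_irrefl _)
        have hcount1 : Multiset.count lam0 (Multiset.map lam Finset.univ.val) = 1 := by
          rw [Multiset.count_map]
          rw [show Multiset.filter (fun a => lam0 = lam a) Finset.univ.val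
              = (Finset.univ.filter (fun j : Fin (Fintype.card V) => lam0 = lam j)).val from rfl]
          rw [hfin]
          rfl
        have hScount : S.card = 1 := by
          have h1 : Multiset.count lam0 (Multiset.map eig Finset.univ.val) = 1 := by
            rw [← hroots]; exact hcount1
          rw [Multiset.count_map] at h1
          have h2 : Finset.univ.filter (fun v : V => lam0 = eig v) = S := by
            apply Finset.filter_congr
            intro v _
            simp [eq_comm]
          rw [show Multiset.filter (fun a => lam0 = eig a) Finset.univ.val
              = (Finset.univ.filter (fun v : V => lam0 = eig v)).val from rfl, h2] at h1
          exact h1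
        obtain ⟨i0, hi0⟩ := Finset.card_eq_one.mp hScount
        have hi0S : i0 ∈ S := by rw [hi0]; exact Finset.mem_singleton_self i0
        have heigi0 : eig i0 = lam0 := hSmem i0 hi0S
        have hd2i0 : d i0 * d i0 = N := by rw [← hd2S, hi0, Finset.sum_singleton]
        have hdci0 : d i0 * c i0 = m := by rw [← hdcS, hi0, Finset.sum_singleton]
        have hci0 : c i0 * c i0 = m ^ 2 / N := by
          rw [eq_div_iff (ne_of_gt hNpos)]
          calc c i0 * c i0 * N = (d i0 * d i0) * (c i0 * c i0) := by rw [hd2i0]; ring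
            _ = (d i0 * c i0) ^ 2 := by ring
            _ = m ^ 2 := by rw [hdci0]
        have hrest : ∀ i : V, i ≠ i0 → lm ≤ p.eval (eig i) := by
          intro i hi
          apply hexlm i
          intro h
          apply hi
          have : i ∈ S := Finset.mem_filter.mpr ⟨Finset.mem_univ _, h⟩
          rw [hi0] at this
          exact Finset.mem_singleton.mp this
        have hsplit2 : ∑ i, (p.eval (eig i) - lm) * (c i * c i)
            = (p.eval (eig i0) - lm) * (c i0 * c i0)
              + ∑ i ∈ Finset.univ.erase i0, (p.eval (eig i) - lm) * (c i * c i) :=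
          (Finset.add_sum_erase Finset.univ _ (Finset.mem_univ i0)).symm
        rw [hsplit2, heigi0, hci0]
        have hnn : 0 ≤ ∑ i ∈ Finset.univ.erase i0, (p.eval (eig i) - lm) * (c i * c i) := by
          apply Finset.sum_nonneg
          intro i hi
          have hine : i ≠ i0 := Finset.ne_of_mem_erase hi
          exact mul_nonneg (sub_nonneg.mpr (hrest i hine)) (mul_self_nonneg _)
        linarith
    linarith
  -- endgame
  have hPlm : p.eval lam0 - lm ≠ 0 := by
    intro h
    rw [h, div_zero] at heq
    linarith
  have hkey : m * (p.eval lam0 - lm) = N * (W - lm) := by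
    have heq' : m = N * (W - lm) / (p.eval lam0 - lm) := heq
    rw [heq', div_mul_cancel₀ _ hPlm]
  have hupper : ∑ u ∈ U, M u u ≤ m * W := by
    calc ∑ u ∈ U, M u u ≤ ∑ u ∈ U, W := Finset.sum_le_sum fun u _ => hW1 u
      _ = m * W := by rw [Finset.sum_const, hm, nsmul_eq_mul]
  have hlower : m * W ≤ ∑ u ∈ U, M u u := by
    rw [hQ]
    refine le_trans (le_of_eq ?_) hmain
    have hexp : (p.eval lam0 - lm) * (m ^ 2 / N) = (W - lm) * m := by
      have h1 : (p.eval lam0 - lm) * (m ^ 2 / N) = (m * (p.eval lam0 - lm)) * m / N := by ring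
      rw [h1, hkey]
      field_simp
    rw [hexp]
    ring
  have hsum : ∑ u ∈ U, M u u = m * W := le_antisymm hupper hlower
  rw [show ∑ u ∈ U, (Polynomial.aeval (G.adjMatrix ℝ) p) u u = ∑ u ∈ U, M u u from rfl, hsum]
  have hm0 : m ≠ 0 := ne_of_gt hmpos
  field_simp
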